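/- Let B ∈ B(H₂, H₁), C ∈ B(H₁, H₂) and T = [[0, B], [C, 0]] on H₁ ⊕ H₂. Then ber(T) ≤ (1/2)(‖B‖ + ‖C‖), where ber is the supremum of |⟨T k, k⟩| over normalized reproducing kernels of H₁ ⊕ H₂. -/

import Mathlib

open scoped InnerProductSpace
open ContinuousLinearMap Complex

variable {H₁ H₂ : Type*}
  [NormedAddCommGroup H₁] [InnerProductSpace ℂ H₁] [CompleteSpace H₁]
  [NormedAddCommGroup H₂] [InnerProductSpace ℂ H₂] [CompleteSpace H₂]

/-- `T ^ e` for a (positive) operator `T`, via the continuous functional calculus. -/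
noncomputable def opow {E : Type*} [NormedAddCommGroup E] [InnerProductSpace ℂ E]
    [CompleteSpace E] (T : E →L[ℂ] E) (e : ℝ) : E →L[ℂ] E :=
  cfc (fun t : ℝ => t ^ e) T

/-- The absolute value `|T| = (T*T)^(1/2)` of an operator between Hilbert spaces. -/
noncomputable def oabs {E F : Type*} [NormedAddCommGroup E] [InnerProductSpace ℂ E]
    [CompleteSpace E] [NormedAddCommGroup F] [InnerProductSpace ℂ F] [CompleteSpace F]
    (T : E →L[ℂ] F) : E →L[ℂ] E :=
  cfc Real.sqrt ((ContinuousLinearMap.adjoint T).comp T)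

/-- Berezin number bound for the off-diagonal operator `[[0, B], [C, 0]]` on `H₁ ⊕ H₂`:
its Berezin symbol at a normalized kernel `(u, v)` is `⟪B v, u⟫ + ⟪C u, v⟫`. -/
theorem berezin_off_diagonal_norm_bound {ι₁ ι₂ : Type*}
    (κ₁ : ι₁ → H₁) (κ₂ : ι₂ → H₂) (hκ₁ : ∀ i, κ₁ i ≠ 0) (hκ₂ : ∀ j, κ₂ j ≠ 0)
    (B : H₂ →L[ℂ] H₁) (C : H₁ →L[ℂ] H₂) :
    (⨆ p : ι₁ × ι₂,
        ‖⟪B ((Real.sqrt (‖κ₁ p.1‖ ^ 2 + ‖κ₂ p.2‖ ^ 2))⁻¹ • κ₂ p.2),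
            (Real.sqrt (‖κ₁ p.1‖ ^ 2 + ‖κ₂ p.2‖ ^ 2))⁻¹ • κ₁ p.1⟫_ℂ +
          ⟪C ((Real.sqrt (‖κ₁ p.1‖ ^ 2 + ‖κ₂ p.2‖ ^ 2))⁻¹ • κ₁ p.1),
            (Real.sqrt (‖κ₁ p.1‖ ^ 2 + ‖κ₂ p.2‖ ^ 2))⁻¹ • κ₂ p.2⟫_ℂ‖) ≤
      (1 / 2) * (‖B‖ + ‖C‖) := by
  have hRHS : (0:ℝ) ≤ (1 / 2) * (‖B‖ + ‖C‖) := by positivity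
  refine Real.iSup_le (fun p => ?_) hRHS
  obtain ⟨i, j⟩ := p
  set a := ‖κ₁ i‖ with ha'
  set b := ‖κ₂ j‖ with hb'
  have ha : 0 < a := norm_pos_iff.mpr (hκ₁ i)
  have hb : 0 < b := norm_pos_iff.mpr (hκ₂ j)
  set s := Real.sqrt (a ^ 2 + b ^ 2) with hs'
  have hs : 0 < s := Real.sqrt_pos.mpr (by positivity)
  have hs2 : s ^ 2 = a ^ 2 + b ^ 2 := Real.sq_sqrt (by positivity)
  have hnu : ‖s⁻¹ • κ₁ i‖ = s⁻¹ * a := by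
    rw [norm_smul, Real.norm_eq_abs, abs_of_pos (inv_pos.mpr hs)]
  have hnv : ‖s⁻¹ • κ₂ j‖ = s⁻¹ * b := by
    rw [norm_smul, Real.norm_eq_abs, abs_of_pos (inv_pos.mpr hs)]
  have h1 : ‖⟪B (s⁻¹ • κ₂ j), s⁻¹ • κ₁ i⟫_ℂ‖ ≤ ‖B‖ * (s⁻¹ * b) * (s⁻¹ * a) := by
    calc ‖⟪B (s⁻¹ • κ₂ j), s⁻¹ • κ₁ i⟫_ℂ‖ ≤ ‖B (s⁻¹ • κ₂ j)‖ * ‖s⁻¹ • κ₁ i‖ :=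
          norm_inner_le_norm _ _
      _ ≤ ‖B‖ * ‖s⁻¹ • κ₂ j‖ * ‖s⁻¹ • κ₁ i‖ := by
          gcongr; exact B.le_opNorm _
      _ = ‖B‖ * (s⁻¹ * b) * (s⁻¹ * a) := by rw [hnu, hnv]
  have h2 : ‖⟪C (s⁻¹ • κ₁ i), s⁻¹ • κ₂ j⟫_ℂ‖ ≤ ‖C‖ * (s⁻¹ * a) * (s⁻¹ * b) := by
    calc ‖⟪C (s⁻¹ • κ₁ i), s⁻¹ • κ₂ j⟫_ℂ‖ ≤ ‖C (s⁻¹ • κ₁ i)‖ * ‖s⁻¹ • κ₂ j‖ :=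
          norm_inner_le_norm _ _
      _ ≤ ‖C‖ * ‖s⁻¹ • κ₁ i‖ * ‖s⁻¹ • κ₂ j‖ := by
          gcongr; exact C.le_opNorm _
      _ = ‖C‖ * (s⁻¹ * a) * (s⁻¹ * b) := by rw [hnu, hnv]
  have hab : s⁻¹ * a * (s⁻¹ * b) ≤ 1 / 2 := by
    have hinv : (0:ℝ) < s⁻¹ := inv_pos.mpr hs
    have h2ab : 2 * (a * b) ≤ s ^ 2 := by nlinarith [sq_nonneg (a - b)]
    have hmul := mul_le_mul_of_nonneg_left h2ab (mul_nonneg hinv.le hinv.le)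
    have he : s⁻¹ * s⁻¹ * s ^ 2 = 1 := by field_simp
    nlinarith [hmul, he]
  calc ‖⟪B (s⁻¹ • κ₂ j), s⁻¹ • κ₁ i⟫_ℂ + ⟪C (s⁻¹ • κ₁ i), s⁻¹ • κ₂ j⟫_ℂ‖
      ≤ ‖⟪B (s⁻¹ • κ₂ j), s⁻¹ • κ₁ i⟫_ℂ‖ + ‖⟪C (s⁻¹ • κ₁ i), s⁻¹ • κ₂ j⟫_ℂ‖ := norm_add_le _ _
    _ ≤ ‖B‖ * (s⁻¹ * b) * (s⁻¹ * a) + ‖C‖ * (s⁻¹ * a) * (s⁻¹ * b) := by linarith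
    _ = (‖B‖ + ‖C‖) * (s⁻¹ * a * (s⁻¹ * b)) := by ring
    _ ≤ (‖B‖ + ‖C‖) * (1 / 2) := by
        have : (0:ℝ) ≤ ‖B‖ + ‖C‖ := by positivity
        exact mul_le_mul_of_nonneg_left hab this
    _ = (1 / 2) * (‖B‖ + ‖C‖) := by ring
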